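/- Let n, pS, pF be positive integers with p = pS + pF, p > n, p > 1. Let V be a p × p Haar-distributed orthogonal random matrix, M = ∑_{k=1}^{n} v_k v_kᵀ, and R = [I_{pS}, 0] ∈ ℝ^{pS×p}. Then E[(R M Rᵀ)²] = μ_q · I_{pS}, where μ_q = (n/(p(p+2)))·(n + pS + 1 − (pS−1)(n−1)/(p−1)). -/

import Mathlib

open MeasureTheory Matrix

instance matrixMeasurableSpace (m n : Type*) : MeasurableSpace (Matrix m n ℝ) :=
  inferInstanceAs (MeasurableSpace (m → n → ℝ))

variable {p : ℕ}

abbrev OG (p : ℕ) := ↥(Matrix.orthogonalGroup (Fin p) ℝ)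

noncomputable def ent (a b : Fin p) (V : OG p) : ℝ := (V : Matrix (Fin p) (Fin p) ℝ) a b

lemma meas_ent (a b : Fin p) : Measurable (ent a b : OG p → ℝ) := by
  have h1 : Measurable (fun V : OG p => (V : Matrix (Fin p) (Fin p) ℝ)) :=
    measurable_subtype_coe
  exact ((measurable_pi_apply b).comp ((measurable_pi_apply a).comp h1))

lemma row_sq (V : OG p) (a : Fin p) : ∑ b, ent a b V * ent a b V = 1 := by
  have h := V.2
  rw [Matrix.mem_orthogonalGroup_iff] at h
  have := congrFun (congrFun h a) a
  simpa [Matrix.mul_apply, ent, Matrix.one_apply] using this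

lemma abs_ent_le (a b : Fin p) (V : OG p) : |ent a b V| ≤ 1 := by
  have h := row_sq V a
  have h2 : ent a b V * ent a b V ≤ 1 := by
    rw [← h]
    exact Finset.single_le_sum (f := fun c => ent a c V * ent a c V)
      (fun c _ => mul_self_nonneg _) (Finset.mem_univ b)
  nlinarith [abs_nonneg (ent a b V), abs_mul_abs_self (ent a b V)]

lemma meas_mulL (g : OG p) : Measurable (fun V : OG p => g * V) := by
  have h : Measurable (fun V : OG p => (g : Matrix (Fin p) (Fin p) ℝ) * (V : Matrix (Fin p) (Fin p) ℝ)) := by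
    apply measurable_pi_lambda
    intro a
    apply measurable_pi_lambda
    intro b
    simp only [Matrix.mul_apply]
    apply Finset.measurable_sum
    intro c _
    exact (measurable_const.mul (meas_ent c b))
  exact h.subtype_mk

lemma meas_mulR (g : OG p) : Measurable (fun V : OG p => V * g) := by
  have h : Measurable (fun V : OG p => (V : Matrix (Fin p) (Fin p) ℝ) * (g : Matrix (Fin p) (Fin p) ℝ)) := by
    apply measurable_pi_lambda
    intro a
    apply measurable_pi_lambda
    intro b
    simp only [Matrix.mul_apply]
    apply Finset.measurable_sum
    intro c _
    exact ((meas_ent a c).mul measurable_const)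
  exact h.subtype_mk

set_option linter.unusedSectionVars false
section Measure
variable (μ : Measure (OG p)) [IsProbabilityMeasure μ]

lemma int_inv_left (hleft : ∀ g : OG p, μ.map (fun V => g * V) = μ)
    (g : OG p) (f : OG p → ℝ) (hf : Measurable f) :
    ∫ V, f (g * V) ∂μ = ∫ V, f V ∂μ := by
  conv_rhs => rw [← hleft g]
  rw [integral_map (meas_mulL g).aemeasurable hf.aestronglyMeasurable]

lemma int_inv_right (hright : ∀ g : OG p, μ.map (fun V => V * g) = μ)
    (g : OG p) (f : OG p → ℝ) (hf : Measurable f) :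
    ∫ V, f (V * g) ∂μ = ∫ V, f V ∂μ := by
  conv_rhs => rw [← hright g]
  rw [integral_map (meas_mulR g).aemeasurable hf.aestronglyMeasurable]

lemma integrable_prod4 (a₁ b₁ a₂ b₂ a₃ b₃ a₄ b₄ : Fin p) :
    Integrable (fun V => ent a₁ b₁ V * ent a₂ b₂ V * ent a₃ b₃ V * ent a₄ b₄ V) μ := by
  apply Integrable.mono' (integrable_const (1:ℝ))
  · exact ((((meas_ent a₁ b₁).mul (meas_ent a₂ b₂)).mul (meas_ent a₃ b₃)).mul
      (meas_ent a₄ b₄)).aestronglyMeasurable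
  · refine ae_of_all _ fun V => ?_
    have h1 := abs_ent_le a₁ b₁ V; have h2 := abs_ent_le a₂ b₂ V
    have h3 := abs_ent_le a₃ b₃ V; have h4 := abs_ent_le a₄ b₄ V
    have e1 := abs_nonneg (ent a₁ b₁ V); have e2 := abs_nonneg (ent a₂ b₂ V)
    have e3 := abs_nonneg (ent a₃ b₃ V); have e4 := abs_nonneg (ent a₄ b₄ V)
    simp only [Real.norm_eq_abs, abs_mul]
    exact mul_le_one₀ (mul_le_one₀ (mul_le_one₀ h1 e2 h2) e3 h3) e4 h4

lemma integrable_prod2 (a₁ b₁ a₂ b₂ : Fin p) :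
    Integrable (fun V => ent a₁ b₁ V * ent a₂ b₂ V) μ := by
  apply Integrable.mono' (integrable_const (1:ℝ))
  · exact ((meas_ent a₁ b₁).mul (meas_ent a₂ b₂)).aestronglyMeasurable
  · refine ae_of_all _ fun V => ?_
    have h1 := abs_ent_le a₁ b₁ V; have h2 := abs_ent_le a₂ b₂ V
    have e1 := abs_nonneg (ent a₁ b₁ V); have e2 := abs_nonneg (ent a₂ b₂ V)
    simp only [Real.norm_eq_abs, abs_mul]
    exact mul_le_one₀ h1 e2 h2

end Measure

noncomputable def flipM (r : Fin p) : Matrix (Fin p) (Fin p) ℝ :=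
  Matrix.diagonal (fun x => if x = r then (-1 : ℝ) else 1)

lemma flipM_mem (r : Fin p) : flipM r ∈ Matrix.orthogonalGroup (Fin p) ℝ := by
  rw [Matrix.mem_orthogonalGroup_iff]
  have hstar : star (flipM (p := p) r) = flipM r := by
    ext x y
    simp only [flipM, Matrix.star_apply, Matrix.diagonal_apply]
    rcases eq_or_ne x y with h | h
    · subst h; simp
    · simp [h, Ne.symm h]
  rw [show (flipM (p := p) r)ᵀ = flipM r from by
    rw [← Matrix.conjTranspose_eq_transpose_of_trivial]; exact hstar]
  unfold flipM
  rw [Matrix.diagonal_mul_diagonal]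
  ext x y
  rcases eq_or_ne x y with h | h
  · subst h; by_cases hx : x = r <;> simp [Matrix.diagonal_apply, hx]
  · simp [Matrix.diagonal_apply, h, Matrix.one_apply, h]

noncomputable def flipg (r : Fin p) : OG p := ⟨flipM r, flipM_mem r⟩

lemma ent_flip_row (r x y : Fin p) (V : OG p) :
    ent x y (flipg r * V) = (if x = r then (-1:ℝ) else 1) * ent x y V := by
  show ((flipM r * (V : Matrix (Fin p) (Fin p) ℝ)) x y) = _
  rw [flipM, Matrix.diagonal_mul]
  rfl

lemma ent_flip_col (r x y : Fin p) (V : OG p) :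
    ent x y (V * flipg r) = ent x y V * (if y = r then (-1:ℝ) else 1) := by
  show (((V : Matrix (Fin p) (Fin p) ℝ) * flipM r) x y) = _
  rw [flipM, Matrix.mul_diagonal]
  rfl

noncomputable def rotM (a b : Fin p) : Matrix (Fin p) (Fin p) ℝ :=
  Matrix.of fun x y =>
    if x = a then (if y = a then 3/5 else if y = b then 4/5 else 0)
    else if x = b then (if y = a then -(4/5) else if y = b then 3/5 else 0)
    else if y = x then 1 else 0

lemma sum_split2 {a b : Fin p} (hab : a ≠ b) (f : Fin p → ℝ) (u v : ℝ)
    (h : ∀ z, f z = (if z = a then u else 0) + (if z = b then v else 0)) :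
    ∑ z, f z = u + v := by
  rw [Finset.sum_congr rfl (fun z _ => h z), Finset.sum_add_distrib]
  simp [Finset.sum_ite_eq']


lemma rotM_mem {a b : Fin p} (hab : a ≠ b) :
    rotM a b ∈ Matrix.orthogonalGroup (Fin p) ℝ := by
  rw [Matrix.mem_orthogonalGroup_iff]
  ext x y
  rw [Matrix.mul_apply]
  have hsum : ∀ z : Fin p, rotM a b x z * (rotM a b)ᵀ z y = rotM a b x z * rotM a b y z := by
    intro z; rfl
  rw [Finset.sum_congr rfl (fun z _ => hsum z)]
  have key : ∀ z, rotM a b x z * rotM a b y z =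
      (if z = a then rotM a b x a * rotM a b y a else 0)
      + ((if z = b then rotM a b x b * rotM a b y b else 0)
      + (if z = x then (if x = a then 0 else if x = b then 0 else rotM a b y x) else 0)) := by
    intro z
    by_cases hza : z = a
    · subst z
      have h2 : (if a = b then rotM a b x b * rotM a b y b else (0:ℝ)) = 0 := by
        simp [hab]
      rw [if_pos rfl, h2]
      by_cases hxa : x = a
      · simp [hxa]
      · simp [Ne.symm hxa, hxa]
    · by_cases hzb : z = b
      · subst z
        rw [if_neg hza, if_pos rfl]
        by_cases hxb : x = b
        · simp [hxb, hab]
        · simp [Ne.symm hxb, hxb, hza]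
      · by_cases hzx : z = x
        · subst z
          rw [if_neg hza, if_neg hzb, if_pos rfl]
          simp only [rotM, Matrix.of_apply, hza, hzb, if_false, if_pos rfl]
          simp [hza, hzb]
        · rw [if_neg hza, if_neg hzb, if_neg hzx]
          simp only [rotM, Matrix.of_apply]
          by_cases hxa : x = a
          · simp [hxa, hza, hzb, Ne.symm hzx]
          · by_cases hxb : x = b
            · simp [hxa, hxb, hza, hzb, Ne.symm hzx]
            · simp only [hxa, hxb, if_false]
              split_ifs <;> simp_all
  rw [Finset.sum_congr rfl (fun z _ => key z), Finset.sum_add_distrib, Finset.sum_add_distrib]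
  simp only [Finset.sum_ite_eq', Finset.mem_univ, if_pos]
  simp only [rotM, Matrix.of_apply, Matrix.one_apply]
  by_cases hxa : x = a
  · subst x
    by_cases hya : y = a
    · subst y; simp [hab, Ne.symm hab]; norm_num
    · by_cases hyb : y = b
      · subst y; simp [hab, Ne.symm hab, hya]; norm_num
      · simp [hab, Ne.symm hab, hya, hyb, Ne.symm hya, Ne.symm hyb]
  · by_cases hxb : x = b
    · subst x
      by_cases hya : y = a
      · subst y; simp [hab, Ne.symm hab, hxa]; norm_num
      · by_cases hyb : y = b
        · subst y; simp [hab, Ne.symm hab, hxa]; norm_num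
        · simp [hab, Ne.symm hab, hxa, hya, hyb, Ne.symm hyb, Ne.symm hya]
    · simp only [if_neg hxa, if_neg hxb]
      by_cases hya : y = a
      · subst y; simp [hxa, hxb, Ne.symm hxa, Ne.symm hxb]
      · by_cases hyb : y = b
        · subst y; simp [hxa, hxb, Ne.symm hxb, Ne.symm hxa]
        · rcases eq_or_ne x y with h | h
          · subst y; simp [hxa, hxb, Ne.symm hxa, Ne.symm hxb]
          · simp [hxa, hxb, hya, hyb, h, Ne.symm h, Ne.symm hya, Ne.symm hyb]

noncomputable def rotg {a b : Fin p} (hab : a ≠ b) : OG p := ⟨rotM a b, rotM_mem hab⟩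

lemma ent_rotL {a b : Fin p} (hab : a ≠ b) (x y : Fin p) (V : OG p) :
    ent x y (rotg hab * V) =
      if x = a then (3/5) * ent a y V + (4/5) * ent b y V
      else if x = b then -(4/5) * ent a y V + (3/5) * ent b y V
      else ent x y V := by
  show ((rotM a b * (V : Matrix (Fin p) (Fin p) ℝ)) x y) = _
  rw [Matrix.mul_apply]
  by_cases hxa : x = a
  · subst x
    rw [if_pos rfl, sum_split2 hab _ ((3:ℝ)/5 * ent a y V) ((4:ℝ)/5 * ent b y V) ?_]
    intro z
    by_cases hz : z = a
    · subst z; simp [rotM, hab, Ne.symm hab, ent]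
    · by_cases hz2 : z = b
      · subst z; simp [rotM, hz, ent]
      · simp [rotM, hz, hz2]
  · by_cases hxb : x = b
    · subst x
      rw [if_neg hxa, if_pos rfl, sum_split2 hab _ (-(4:ℝ)/5 * ent a y V) ((3:ℝ)/5 * ent b y V) ?_]
      · norm_num
      intro z
      by_cases hz : z = a
      · subst z; simp [rotM, hab, Ne.symm hab, hxa, ent]; ring
      · by_cases hz2 : z = b
        · subst z; simp [rotM, hz, hxa, ent]
        · simp [rotM, hz, hz2, hxa]
    · rw [if_neg hxa, if_neg hxb]
      have : ∀ z, rotM a b x z * (V : Matrix (Fin p) (Fin p) ℝ) z y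
          = if z = x then ent x y V else 0 := by
        intro z
        by_cases hz : z = x
        · subst z; simp [rotM, hxa, hxb, ent]
        · by_cases hza : z = a
          · subst z; simp [rotM, hxa, hxb, hz]
          · by_cases hzb : z = b
            · subst z; simp [rotM, hxa, hxb, hz]
            · simp [rotM, hza, hzb, hz, Ne.symm hz]
      rw [Finset.sum_congr rfl (fun z _ => this z)]
      simp [Finset.sum_ite_eq']

lemma ent_rotR {a b : Fin p} (hab : a ≠ b) (x y : Fin p) (V : OG p) :
    ent x y (V * rotg hab) =
      if y = a then (3/5) * ent x a V - (4/5) * ent x b V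
      else if y = b then (4/5) * ent x a V + (3/5) * ent x b V
      else ent x y V := by
  show (((V : Matrix (Fin p) (Fin p) ℝ) * rotM a b) x y) = _
  rw [Matrix.mul_apply]
  by_cases hya : y = a
  · subst y
    rw [if_pos rfl, sum_split2 hab _ ((3:ℝ)/5 * ent x a V) (-((4:ℝ)/5) * ent x b V) ?_]
    · ring
    intro z
    by_cases hz : z = a
    · subst z; simp [rotM, hab, Ne.symm hab, ent]; ring
    · by_cases hz2 : z = b
      · subst z; simp [rotM, hz, Ne.symm hz, ent]; ring
      · simp [rotM, hz, hz2, Ne.symm hz, Ne.symm hz2]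
  · by_cases hyb : y = b
    · subst y
      rw [if_neg hya, if_pos rfl, sum_split2 hab _ ((4:ℝ)/5 * ent x a V) ((3:ℝ)/5 * ent x b V) ?_]
      intro z
      by_cases hz : z = a
      · subst z; simp [rotM, hab, Ne.symm hab, hya, ent]; ring
      · by_cases hz2 : z = b
        · subst z; simp [rotM, hz, hya, ent]; ring
        · simp [rotM, hz, hz2, hya, Ne.symm hz, Ne.symm hz2]
    · rw [if_neg hya, if_neg hyb]
      have : ∀ z, (V : Matrix (Fin p) (Fin p) ℝ) x z * rotM a b z y
          = if z = y then ent x y V else 0 := by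
        intro z
        by_cases hz : z = y
        · subst z
          simp [rotM, hya, hyb, ent]
        · by_cases hza : z = a
          · subst z; simp [rotM, hya, hyb, hz]
          · by_cases hzb : z = b
            · subst z; simp [rotM, hya, hyb, hz, hza]
            · simp [rotM, hza, hzb, hz, Ne.symm hz]
      rw [Finset.sum_congr rfl (fun z _ => this z)]
      simp [Finset.sum_ite_eq']

section Moments
variable (μ : Measure (OG p)) [IsProbabilityMeasure μ]

lemma int_odd_row (hleft : ∀ g : OG p, μ.map (fun V => g * V) = μ)
    (r : Fin p) (f : OG p → ℝ) (hf : Measurable f)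
    (hodd : ∀ V, f (flipg r * V) = - f V) : ∫ V, f V ∂μ = 0 := by
  have h := int_inv_left μ hleft (flipg r) f hf
  have h2 : ∫ V, f (flipg r * V) ∂μ = ∫ V, - f V ∂μ :=
    integral_congr_ae (Filter.EventuallyEq.of_eq (funext hodd))
  rw [h2, integral_neg] at h
  linarith

lemma int_odd_col (hright : ∀ g : OG p, μ.map (fun V => V * g) = μ)
    (r : Fin p) (f : OG p → ℝ) (hf : Measurable f)
    (hodd : ∀ V, f (V * flipg r) = - f V) : ∫ V, f V ∂μ = 0 := by
  have h := int_inv_right μ hright (flipg r) f hf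
  have h2 : ∫ V, f (V * flipg r) ∂μ = ∫ V, - f V ∂μ :=
    integral_congr_ae (Filter.EventuallyEq.of_eq (funext hodd))
  rw [h2, integral_neg] at h
  linarith

lemma meas4 (a₁ b₁ a₂ b₂ a₃ b₃ a₄ b₄ : Fin p) :
    Measurable (fun V => ent a₁ b₁ V * ent a₂ b₂ V * ent a₃ b₃ V * ent a₄ b₄ V) :=
  (((meas_ent a₁ b₁).mul (meas_ent a₂ b₂)).mul (meas_ent a₃ b₃)).mul (meas_ent a₄ b₄)

lemma meas2 (a₁ b₁ a₂ b₂ : Fin p) :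
    Measurable (fun V => ent a₁ b₁ V * ent a₂ b₂ V) :=
  (meas_ent a₁ b₁).mul (meas_ent a₂ b₂)

lemma odd4_col (hright : ∀ g : OG p, μ.map (fun V => V * g) = μ)
    (β : Fin p) (r s t u : Fin p) (α₁ α₂ α₃ : Fin p)
    (h1 : α₁ ≠ β) (h2 : α₂ ≠ β) (h3 : α₃ ≠ β) :
    ∫ V, ent r α₁ V * ent s α₂ V * ent t α₃ V * ent u β V ∂μ = 0 := by
  apply int_odd_col μ hright β _ (meas4 r α₁ s α₂ t α₃ u β)
  intro V
  simp only [ent_flip_col]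
  norm_num
  simp [h1, h2, h3]

lemma odd2_col (hright : ∀ g : OG p, μ.map (fun V => V * g) = μ)
    (β : Fin p) (r s : Fin p) (α : Fin p) (h1 : α ≠ β) :
    ∫ V, ent r α V * ent s β V ∂μ = 0 := by
  apply int_odd_col μ hright β _ (meas2 r α s β)
  intro V
  simp only [ent_flip_col]
  norm_num
  intro h; exact absurd h h1

lemma odd4_row (hleft : ∀ g : OG p, μ.map (fun V => g * V) = μ)
    (s : Fin p) (r₁ r₂ r₃ : Fin p) (c₁ c₂ c₃ c₄ : Fin p)
    (h1 : r₁ ≠ s) (h2 : r₂ ≠ s) (h3 : r₃ ≠ s) :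
    ∫ V, ent r₁ c₁ V * ent r₂ c₂ V * ent r₃ c₃ V * ent s c₄ V ∂μ = 0 := by
  apply int_odd_row μ hleft s _ (meas4 r₁ c₁ r₂ c₂ r₃ c₃ s c₄)
  intro V
  simp only [ent_flip_row]
  norm_num
  simp [h1, h2, h3]

lemma int_comb3 (c1 c2 c3 : ℝ) (f1 f2 f3 : OG p → ℝ)
    (h1 : Integrable f1 μ)
    (h2 : Integrable f2 μ)
    (h3 : Integrable f3 μ) :
    ∫ V, (c1 * f1 V + (c2 * f2 V + (c3 * f3 V))) ∂μ = c1 * ∫ V, f1 V ∂μ + (c2 * ∫ V, f2 V ∂μ + (c3 * ∫ V, f3 V ∂μ)) := by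
  have hh2 : Integrable (fun V => c2 * f2 V + (c3 * f3 V)) μ := (h2.const_mul c2).add (h3.const_mul c3)
  rw [integral_add (h1.const_mul c1) hh2,
    integral_add (h2.const_mul c2) (h3.const_mul c3),
    integral_const_mul,
    integral_const_mul,
    integral_const_mul]

lemma int_comb5 (c1 c2 c3 c4 c5 : ℝ) (f1 f2 f3 f4 f5 : OG p → ℝ)
    (h1 : Integrable f1 μ)
    (h2 : Integrable f2 μ)
    (h3 : Integrable f3 μ)
    (h4 : Integrable f4 μ)
    (h5 : Integrable f5 μ) :
    ∫ V, (c1 * f1 V + (c2 * f2 V + (c3 * f3 V + (c4 * f4 V + (c5 * f5 V))))) ∂μ = c1 * ∫ V, f1 V ∂μ + (c2 * ∫ V, f2 V ∂μ + (c3 * ∫ V, f3 V ∂μ + (c4 * ∫ V, f4 V ∂μ + (c5 * ∫ V, f5 V ∂μ)))) := by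
  have hh4 : Integrable (fun V => c4 * f4 V + (c5 * f5 V)) μ := (h4.const_mul c4).add (h5.const_mul c5)
  have hh3 : Integrable (fun V => c3 * f3 V + (c4 * f4 V + (c5 * f5 V))) μ := (h3.const_mul c3).add hh4
  have hh2 : Integrable (fun V => c2 * f2 V + (c3 * f3 V + (c4 * f4 V + (c5 * f5 V)))) μ := (h2.const_mul c2).add hh3
  rw [integral_add (h1.const_mul c1) hh2,
    integral_add (h2.const_mul c2) hh3,
    integral_add (h3.const_mul c3) hh4,
    integral_add (h4.const_mul c4) (h5.const_mul c5),
    integral_const_mul,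
    integral_const_mul,
    integral_const_mul,
    integral_const_mul,
    integral_const_mul]

lemma int_comb9 (c1 c2 c3 c4 c5 c6 c7 c8 c9 : ℝ) (f1 f2 f3 f4 f5 f6 f7 f8 f9 : OG p → ℝ)
    (h1 : Integrable f1 μ)
    (h2 : Integrable f2 μ)
    (h3 : Integrable f3 μ)
    (h4 : Integrable f4 μ)
    (h5 : Integrable f5 μ)
    (h6 : Integrable f6 μ)
    (h7 : Integrable f7 μ)
    (h8 : Integrable f8 μ)
    (h9 : Integrable f9 μ) :
    ∫ V, (c1 * f1 V + (c2 * f2 V + (c3 * f3 V + (c4 * f4 V + (c5 * f5 V + (c6 * f6 V + (c7 * f7 V + (c8 * f8 V + (c9 * f9 V))))))))) ∂μ = c1 * ∫ V, f1 V ∂μ + (c2 * ∫ V, f2 V ∂μ + (c3 * ∫ V, f3 V ∂μ + (c4 * ∫ V, f4 V ∂μ + (c5 * ∫ V, f5 V ∂μ + (c6 * ∫ V, f6 V ∂μ + (c7 * ∫ V, f7 V ∂μ + (c8 * ∫ V, f8 V ∂μ + (c9 * ∫ V, f9 V ∂μ)))))))) := by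
  have hh8 : Integrable (fun V => c8 * f8 V + (c9 * f9 V)) μ := (h8.const_mul c8).add (h9.const_mul c9)
  have hh7 : Integrable (fun V => c7 * f7 V + (c8 * f8 V + (c9 * f9 V))) μ := (h7.const_mul c7).add hh8
  have hh6 : Integrable (fun V => c6 * f6 V + (c7 * f7 V + (c8 * f8 V + (c9 * f9 V)))) μ := (h6.const_mul c6).add hh7
  have hh5 : Integrable (fun V => c5 * f5 V + (c6 * f6 V + (c7 * f7 V + (c8 * f8 V + (c9 * f9 V))))) μ := (h5.const_mul c5).add hh6
  have hh4 : Integrable (fun V => c4 * f4 V + (c5 * f5 V + (c6 * f6 V + (c7 * f7 V + (c8 * f8 V + (c9 * f9 V)))))) μ := (h4.const_mul c4).add hh5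
  have hh3 : Integrable (fun V => c3 * f3 V + (c4 * f4 V + (c5 * f5 V + (c6 * f6 V + (c7 * f7 V + (c8 * f8 V + (c9 * f9 V))))))) μ := (h3.const_mul c3).add hh4
  have hh2 : Integrable (fun V => c2 * f2 V + (c3 * f3 V + (c4 * f4 V + (c5 * f5 V + (c6 * f6 V + (c7 * f7 V + (c8 * f8 V + (c9 * f9 V)))))))) μ := (h2.const_mul c2).add hh3
  rw [integral_add (h1.const_mul c1) hh2,
    integral_add (h2.const_mul c2) hh3,
    integral_add (h3.const_mul c3) hh4,
    integral_add (h4.const_mul c4) hh5,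
    integral_add (h5.const_mul c5) hh6,
    integral_add (h6.const_mul c6) hh7,
    integral_add (h7.const_mul c7) hh8,
    integral_add (h8.const_mul c8) (h9.const_mul c9),
    integral_const_mul,
    integral_const_mul,
    integral_const_mul,
    integral_const_mul,
    integral_const_mul,
    integral_const_mul,
    integral_const_mul,
    integral_const_mul,
    integral_const_mul]

end Moments

section MomentVals
variable (μ : Measure (OG p)) [IsProbabilityMeasure μ]
  (hleft : ∀ g : OG p, μ.map (fun V => g * V) = μ)
  (hright : ∀ g : OG p, μ.map (fun V => V * g) = μ)

include hleft hright

lemma mom2_eq (a k k' : Fin p) :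
    ∫ V, ent a k V * ent a k V ∂μ = ∫ V, ent a k' V * ent a k' V ∂μ := by
  rcases eq_or_ne k k' with rfl | hkk'
  · rfl
  have hz : ∫ V, ent a k V * ent a k' V ∂μ = 0 := odd2_col μ hright k' a a k hkk'
  have hinv : ∫ V, ent a k (V * rotg hkk') * ent a k (V * rotg hkk') ∂μ
      = ∫ V, ent a k V * ent a k V ∂μ :=
    int_inv_right μ hright (rotg hkk') (fun W => ent a k W * ent a k W) (meas2 a k a k)
  have hpt : ∀ V : OG p, (9:ℝ)/25 * (ent a k V * ent a k V)
      + (-(24/25) * (ent a k V * ent a k' V) + 16/25 * (ent a k' V * ent a k' V))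
      = ent a k (V * rotg hkk') * ent a k (V * rotg hkk') := by
    intro V
    rw [ent_rotR hkk' a k V, if_pos rfl]
    ring
  have hcomb := int_comb3 μ (9/25) (-(24/25)) (16/25)
      (fun V => ent a k V * ent a k V) (fun V => ent a k V * ent a k' V)
      (fun V => ent a k' V * ent a k' V)
      (integrable_prod2 μ a k a k) (integrable_prod2 μ a k a k') (integrable_prod2 μ a k' a k')
  have hmain : (9:ℝ)/25 * (∫ V, ent a k V * ent a k V ∂μ)
      + (-(24/25) * (∫ V, ent a k V * ent a k' V ∂μ)
        + 16/25 * (∫ V, ent a k' V * ent a k' V ∂μ))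
      = ∫ V, ent a k V * ent a k V ∂μ := by
    rw [← hcomb, integral_congr_ae (Filter.EventuallyEq.of_eq (funext hpt))]
    exact hinv
  rw [hz] at hmain
  linarith

lemma mom2_val (hp1 : 1 < p) (a k : Fin p) :
    ∫ V, ent a k V * ent a k V ∂μ = 1 / (p : ℝ) := by
  have hsum : ∑ k' : Fin p, (∫ V, ent a k' V * ent a k' V ∂μ) = 1 := by
    rw [← integral_finset_sum Finset.univ (fun k' _ => integrable_prod2 μ a k' a k')]
    have hone : ∀ V : OG p, (∑ k' : Fin p, ent a k' V * ent a k' V) = 1 := fun V => row_sq V a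
    rw [integral_congr_ae (Filter.EventuallyEq.of_eq (funext hone))]
    simp
  have hconst : ∀ k' : Fin p, (∫ V, ent a k' V * ent a k' V ∂μ)
      = ∫ V, ent a k V * ent a k V ∂μ := fun k' => mom2_eq μ hleft hright a k' k
  rw [Finset.sum_congr rfl (fun k' _ => hconst k'), Finset.sum_const, Finset.card_univ,
    Fintype.card_fin, nsmul_eq_mul] at hsum
  have hp0 : (p : ℝ) ≠ 0 := by positivity
  rw [eq_div_iff hp0]
  linarith

lemma mom4_pair (a k k' : Fin p) (hkk' : k ≠ k') :
    (∫ V, ent a k V * ent a k V * ent a k V * ent a k V ∂μ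
      = ∫ V, ent a k' V * ent a k' V * ent a k' V * ent a k' V ∂μ)
    ∧ (∫ V, ent a k V * ent a k V * ent a k' V * ent a k' V ∂μ
      = (∫ V, ent a k V * ent a k V * ent a k V * ent a k V ∂μ) / 3) := by
  have hz1 : ∫ V, ent a k V * ent a k V * ent a k V * ent a k' V ∂μ = 0 :=
    odd4_col μ hright k' a a a a k k k hkk' hkk' hkk'
  have hz2 : ∫ V, ent a k' V * ent a k' V * ent a k' V * ent a k V ∂μ = 0 :=
    odd4_col μ hright k a a a a k' k' k' hkk'.symm hkk'.symm hkk'.symm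
  have hcomb := int_comb5 μ (81/625) (-(432/625)) (864/625) (-(768/625)) (256/625)
      (fun V => ent a k V * ent a k V * ent a k V * ent a k V)
      (fun V => ent a k V * ent a k V * ent a k V * ent a k' V)
      (fun V => ent a k V * ent a k V * ent a k' V * ent a k' V)
      (fun V => ent a k' V * ent a k' V * ent a k' V * ent a k V)
      (fun V => ent a k' V * ent a k' V * ent a k' V * ent a k' V)
      (integrable_prod4 μ a k a k a k a k) (integrable_prod4 μ a k a k a k a k')
      (integrable_prod4 μ a k a k a k' a k') (integrable_prod4 μ a k' a k' a k' a k)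
      (integrable_prod4 μ a k' a k' a k' a k')
  have hinv1 : ∫ V, ent a k (V * rotg hkk') * ent a k (V * rotg hkk')
        * ent a k (V * rotg hkk') * ent a k (V * rotg hkk') ∂μ
      = ∫ V, ent a k V * ent a k V * ent a k V * ent a k V ∂μ :=
    int_inv_right μ hright (rotg hkk')
      (fun W => ent a k W * ent a k W * ent a k W * ent a k W) (meas4 a k a k a k a k)
  have hpt1 : ∀ V : OG p, (81:ℝ)/625 * (ent a k V * ent a k V * ent a k V * ent a k V)
      + (-(432/625) * (ent a k V * ent a k V * ent a k V * ent a k' V)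
      + (864/625 * (ent a k V * ent a k V * ent a k' V * ent a k' V)
      + (-(768/625) * (ent a k' V * ent a k' V * ent a k' V * ent a k V)
      + 256/625 * (ent a k' V * ent a k' V * ent a k' V * ent a k' V))))
      = ent a k (V * rotg hkk') * ent a k (V * rotg hkk')
        * ent a k (V * rotg hkk') * ent a k (V * rotg hkk') := by
    intro V
    rw [ent_rotR hkk' a k V, if_pos rfl]
    ring
  have hrel1 : (81:ℝ)/625 * (∫ V, ent a k V * ent a k V * ent a k V * ent a k V ∂μ)
      + (-(432/625) * (∫ V, ent a k V * ent a k V * ent a k V * ent a k' V ∂μ)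
      + (864/625 * (∫ V, ent a k V * ent a k V * ent a k' V * ent a k' V ∂μ)
      + (-(768/625) * (∫ V, ent a k' V * ent a k' V * ent a k' V * ent a k V ∂μ)
      + 256/625 * (∫ V, ent a k' V * ent a k' V * ent a k' V * ent a k' V ∂μ))))
      = ∫ V, ent a k V * ent a k V * ent a k V * ent a k V ∂μ := by
    rw [← hcomb, integral_congr_ae (Filter.EventuallyEq.of_eq (funext hpt1))]
    exact hinv1
  have hcomb2 := int_comb5 μ (256/625) (768/625) (864/625) (432/625) (81/625)
      (fun V => ent a k V * ent a k V * ent a k V * ent a k V)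
      (fun V => ent a k V * ent a k V * ent a k V * ent a k' V)
      (fun V => ent a k V * ent a k V * ent a k' V * ent a k' V)
      (fun V => ent a k' V * ent a k' V * ent a k' V * ent a k V)
      (fun V => ent a k' V * ent a k' V * ent a k' V * ent a k' V)
      (integrable_prod4 μ a k a k a k a k) (integrable_prod4 μ a k a k a k a k')
      (integrable_prod4 μ a k a k a k' a k') (integrable_prod4 μ a k' a k' a k' a k)
      (integrable_prod4 μ a k' a k' a k' a k')
  have hinv2 : ∫ V, ent a k' (V * rotg hkk') * ent a k' (V * rotg hkk')
        * ent a k' (V * rotg hkk') * ent a k' (V * rotg hkk') ∂μ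
      = ∫ V, ent a k' V * ent a k' V * ent a k' V * ent a k' V ∂μ :=
    int_inv_right μ hright (rotg hkk')
      (fun W => ent a k' W * ent a k' W * ent a k' W * ent a k' W) (meas4 a k' a k' a k' a k')
  have hpt2 : ∀ V : OG p, (256:ℝ)/625 * (ent a k V * ent a k V * ent a k V * ent a k V)
      + (768/625 * (ent a k V * ent a k V * ent a k V * ent a k' V)
      + (864/625 * (ent a k V * ent a k V * ent a k' V * ent a k' V)
      + (432/625 * (ent a k' V * ent a k' V * ent a k' V * ent a k V)
      + 81/625 * (ent a k' V * ent a k' V * ent a k' V * ent a k' V))))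
      = ent a k' (V * rotg hkk') * ent a k' (V * rotg hkk')
        * ent a k' (V * rotg hkk') * ent a k' (V * rotg hkk') := by
    intro V
    rw [ent_rotR hkk' a k' V, if_neg (Ne.symm hkk'), if_pos rfl]
    ring
  have hrel2 : (256:ℝ)/625 * (∫ V, ent a k V * ent a k V * ent a k V * ent a k V ∂μ)
      + (768/625 * (∫ V, ent a k V * ent a k V * ent a k V * ent a k' V ∂μ)
      + (864/625 * (∫ V, ent a k V * ent a k V * ent a k' V * ent a k' V ∂μ)
      + (432/625 * (∫ V, ent a k' V * ent a k' V * ent a k' V * ent a k V ∂μ)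
      + 81/625 * (∫ V, ent a k' V * ent a k' V * ent a k' V * ent a k' V ∂μ))))
      = ∫ V, ent a k' V * ent a k' V * ent a k' V * ent a k' V ∂μ := by
    rw [← hcomb2, integral_congr_ae (Filter.EventuallyEq.of_eq (funext hpt2))]
    exact hinv2
  rw [hz1, hz2] at hrel1 hrel2
  constructor
  · linarith
  · linarith

omit hleft hright in
lemma sum_ite_fixed {m : ℕ} (i : Fin m) (X Y : ℝ) :
    ∑ l : Fin m, (if l = i then X else Y) = X + ((m:ℝ) - 1) * Y := by
  rw [← Finset.add_sum_erase _ _ (Finset.mem_univ i), if_pos rfl]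
  congr 1
  rw [Finset.sum_congr rfl (fun l hl => if_neg (Finset.ne_of_mem_erase hl)), Finset.sum_const,
    Finset.card_erase_of_mem (Finset.mem_univ i), Finset.card_univ, Fintype.card_fin,
    nsmul_eq_mul]
  have h1 : 1 ≤ m := i.pos
  rw [Nat.cast_sub h1]
  norm_num

omit hleft hright in
lemma sum_ite_fixed' {m : ℕ} (i : Fin m) (X Y : ℝ) :
    ∑ l : Fin m, (if i = l then X else Y) = X + ((m:ℝ) - 1) * Y := by
  have h : ∀ l : Fin m, (if i = l then X else Y) = (if l = i then X else Y) := by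
    intro l
    rcases eq_or_ne l i with rfl | h
    · simp
    · rw [if_neg h, if_neg (Ne.symm h)]
  rw [Finset.sum_congr rfl (fun l _ => h l)]
  exact sum_ite_fixed i X Y

omit hleft hright in
lemma sum_ifdiag {m : ℕ} (X Y : ℝ) :
    ∑ k : Fin m, ∑ k' : Fin m, (if k = k' then X else Y)
      = (m:ℝ) * X + ((m:ℝ) * ((m:ℝ) - 1)) * Y := by
  rcases Nat.eq_zero_or_pos m with rfl | hm
  · simp
  rw [Finset.sum_congr rfl (fun k _ => sum_ite_fixed' k X Y), Finset.sum_const,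
    Finset.card_univ, Fintype.card_fin, nsmul_eq_mul]
  ring

lemma mom4_val (hp1 : 1 < p) (a k : Fin p) :
    ∫ V, ent a k V * ent a k V * ent a k V * ent a k V ∂μ = 3 / ((p:ℝ) * ((p:ℝ) + 2)) := by
  set P := ∫ V, ent a k V * ent a k V * ent a k V * ent a k V ∂μ with hP
  have hPall : ∀ k1 : Fin p, ∫ V, ent a k1 V * ent a k1 V * ent a k1 V * ent a k1 V ∂μ = P := by
    intro k1
    rcases eq_or_ne k1 k with rfl | h
    · rfl
    · exact (mom4_pair μ hleft hright a k1 k h).1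
  have key : ∀ k1 k2 : Fin p, ∫ V, ent a k1 V * ent a k1 V * ent a k2 V * ent a k2 V ∂μ
      = if k1 = k2 then P else P / 3 := by
    intro k1 k2
    rcases eq_or_ne k1 k2 with rfl | h
    · rw [if_pos rfl]; exact hPall k1
    · rw [if_neg h, (mom4_pair μ hleft hright a k1 k2 h).2, hPall k1]
  have hsum : ∑ k1 : Fin p, ∑ k2 : Fin p,
      (∫ V, ent a k1 V * ent a k1 V * ent a k2 V * ent a k2 V ∂μ) = 1 := by
    rw [← Finset.sum_congr rfl (fun k1 _ => integral_finset_sum Finset.univ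
      (fun k2 _ => integrable_prod4 μ a k1 a k1 a k2 a k2)),
      ← integral_finset_sum Finset.univ (fun k1 _ => integrable_finset_sum Finset.univ
      (fun k2 _ => integrable_prod4 μ a k1 a k1 a k2 a k2))]
    have hone : ∀ V : OG p, (∑ k1 : Fin p, ∑ k2 : Fin p,
        ent a k1 V * ent a k1 V * ent a k2 V * ent a k2 V) = 1 := by
      intro V
      have expand : ∀ k1 k2 : Fin p, ent a k1 V * ent a k1 V * ent a k2 V * ent a k2 V
          = (ent a k1 V * ent a k1 V) * (ent a k2 V * ent a k2 V) := fun _ _ => by ring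
      rw [Finset.sum_congr rfl (fun k1 _ => Finset.sum_congr rfl (fun k2 _ => expand k1 k2)),
        ← Finset.sum_mul_sum, row_sq V a, one_mul]
    rw [integral_congr_ae (Filter.EventuallyEq.of_eq (funext hone))]
    simp
  rw [Finset.sum_congr rfl (fun k1 _ => Finset.sum_congr rfl (fun k2 _ => key k1 k2)),
    sum_ifdiag] at hsum
  have hp0 : (p:ℝ) ≠ 0 := by positivity
  have hp2 : (p:ℝ) + 2 ≠ 0 := by positivity
  field_simp
  linarith [hsum]

lemma momB_val (hp1 : 1 < p) (a k k' : Fin p) (hkk' : k ≠ k') :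
    ∫ V, ent a k V * ent a k V * ent a k' V * ent a k' V ∂μ = 1 / ((p:ℝ) * ((p:ℝ) + 2)) := by
  rw [(mom4_pair μ hleft hright a k k' hkk').2, mom4_val μ hleft hright hp1 a k]
  ring

lemma momC_val (hp1 : 1 < p) (a a' k : Fin p) (ha : a ≠ a') :
    ∫ V, ent a k V * ent a k V * ent a' k V * ent a' k V ∂μ = 1 / ((p:ℝ) * ((p:ℝ) + 2)) := by
  have hz1 : ∫ V, ent a k V * ent a k V * ent a k V * ent a' k V ∂μ = 0 :=
    odd4_row μ hleft a' a a a k k k k ha ha ha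
  have hz2 : ∫ V, ent a' k V * ent a' k V * ent a' k V * ent a k V ∂μ = 0 :=
    odd4_row μ hleft a a' a' a' k k k k (Ne.symm ha) (Ne.symm ha) (Ne.symm ha)
  have hcomb := int_comb5 μ (81/625) (432/625) (864/625) (768/625) (256/625)
      (fun V => ent a k V * ent a k V * ent a k V * ent a k V)
      (fun V => ent a k V * ent a k V * ent a k V * ent a' k V)
      (fun V => ent a k V * ent a k V * ent a' k V * ent a' k V)
      (fun V => ent a' k V * ent a' k V * ent a' k V * ent a k V)
      (fun V => ent a' k V * ent a' k V * ent a' k V * ent a' k V)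
      (integrable_prod4 μ a k a k a k a k) (integrable_prod4 μ a k a k a k a' k)
      (integrable_prod4 μ a k a k a' k a' k) (integrable_prod4 μ a' k a' k a' k a k)
      (integrable_prod4 μ a' k a' k a' k a' k)
  have hinv : ∫ V, ent a k (rotg ha * V) * ent a k (rotg ha * V)
        * ent a k (rotg ha * V) * ent a k (rotg ha * V) ∂μ
      = ∫ V, ent a k V * ent a k V * ent a k V * ent a k V ∂μ :=
    int_inv_left μ hleft (rotg ha)
      (fun W => ent a k W * ent a k W * ent a k W * ent a k W) (meas4 a k a k a k a k)
  have hpt : ∀ V : OG p, (81:ℝ)/625 * (ent a k V * ent a k V * ent a k V * ent a k V)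
      + (432/625 * (ent a k V * ent a k V * ent a k V * ent a' k V)
      + (864/625 * (ent a k V * ent a k V * ent a' k V * ent a' k V)
      + (768/625 * (ent a' k V * ent a' k V * ent a' k V * ent a k V)
      + 256/625 * (ent a' k V * ent a' k V * ent a' k V * ent a' k V))))
      = ent a k (rotg ha * V) * ent a k (rotg ha * V)
        * ent a k (rotg ha * V) * ent a k (rotg ha * V) := by
    intro V
    rw [ent_rotL ha a k V, if_pos rfl]
    ring
  have hrel : (81:ℝ)/625 * (∫ V, ent a k V * ent a k V * ent a k V * ent a k V ∂μ)
      + (432/625 * (∫ V, ent a k V * ent a k V * ent a k V * ent a' k V ∂μ)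
      + (864/625 * (∫ V, ent a k V * ent a k V * ent a' k V * ent a' k V ∂μ)
      + (768/625 * (∫ V, ent a' k V * ent a' k V * ent a' k V * ent a k V ∂μ)
      + 256/625 * (∫ V, ent a' k V * ent a' k V * ent a' k V * ent a' k V ∂μ))))
      = ∫ V, ent a k V * ent a k V * ent a k V * ent a k V ∂μ := by
    rw [← hcomb, integral_congr_ae (Filter.EventuallyEq.of_eq (funext hpt))]
    exact hinv
  rw [hz1, hz2, mom4_val μ hleft hright hp1 a k, mom4_val μ hleft hright hp1 a' k] at hrel
  have haux : (3:ℝ)/((p:ℝ)*((p:ℝ)+2)) = 3 * (1/((p:ℝ)*((p:ℝ)+2))) := by ring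
  linarith [haux]

lemma momD_val (hp1 : 1 < p) (a a' k k' : Fin p) (ha : a ≠ a') (hk : k ≠ k') :
    ∫ V, ent a k V * ent a k V * ent a' k' V * ent a' k' V ∂μ
      = ((p:ℝ) + 1) / (((p:ℝ) - 1) * (p:ℝ) * ((p:ℝ) + 2)) := by
  -- constancy in the second column
  have hconst : ∀ c1 c2 : Fin p, c1 ≠ k → c2 ≠ k →
      ∫ V, ent a k V * ent a k V * ent a' c1 V * ent a' c1 V ∂μ
        = ∫ V, ent a k V * ent a k V * ent a' c2 V * ent a' c2 V ∂μ := by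
    intro c1 c2 h1 h2
    rcases eq_or_ne c1 c2 with rfl | h12
    · rfl
    have hz : ∫ V, ent a k V * ent a k V * ent a' c1 V * ent a' c2 V ∂μ = 0 :=
      odd4_col μ hright c2 a a a' a' k k c1 (fun h => h2 h.symm)
        (fun h => h2 h.symm) h12
    have hcomb := int_comb3 μ (9/25) (-(24/25)) (16/25)
        (fun V => ent a k V * ent a k V * ent a' c1 V * ent a' c1 V)
        (fun V => ent a k V * ent a k V * ent a' c1 V * ent a' c2 V)
        (fun V => ent a k V * ent a k V * ent a' c2 V * ent a' c2 V)
        (integrable_prod4 μ a k a k a' c1 a' c1) (integrable_prod4 μ a k a k a' c1 a' c2)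
        (integrable_prod4 μ a k a k a' c2 a' c2)
    have hinv : ∫ V, ent a k (V * rotg h12) * ent a k (V * rotg h12)
          * ent a' c1 (V * rotg h12) * ent a' c1 (V * rotg h12) ∂μ
        = ∫ V, ent a k V * ent a k V * ent a' c1 V * ent a' c1 V ∂μ :=
      int_inv_right μ hright (rotg h12)
        (fun W => ent a k W * ent a k W * ent a' c1 W * ent a' c1 W) (meas4 a k a k a' c1 a' c1)
    have hpt : ∀ V : OG p, (9:ℝ)/25 * (ent a k V * ent a k V * ent a' c1 V * ent a' c1 V)
        + (-(24/25) * (ent a k V * ent a k V * ent a' c1 V * ent a' c2 V)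
        + 16/25 * (ent a k V * ent a k V * ent a' c2 V * ent a' c2 V))
        = ent a k (V * rotg h12) * ent a k (V * rotg h12)
          * ent a' c1 (V * rotg h12) * ent a' c1 (V * rotg h12) := by
      intro V
      rw [ent_rotR h12 a k V, ent_rotR h12 a' c1 V, if_neg (Ne.symm h1), if_pos rfl]
      rw [if_neg (show k ≠ c2 from fun h => h2 h.symm)]
      ring
    have hrel : (9:ℝ)/25 * (∫ V, ent a k V * ent a k V * ent a' c1 V * ent a' c1 V ∂μ)
        + (-(24/25) * (∫ V, ent a k V * ent a k V * ent a' c1 V * ent a' c2 V ∂μ)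
        + 16/25 * (∫ V, ent a k V * ent a k V * ent a' c2 V * ent a' c2 V ∂μ))
        = ∫ V, ent a k V * ent a k V * ent a' c1 V * ent a' c1 V ∂μ := by
      rw [← hcomb, integral_congr_ae (Filter.EventuallyEq.of_eq (funext hpt))]
      exact hinv
    rw [hz] at hrel
    linarith
  -- sum over the second column
  have hsum : ∑ c : Fin p, (∫ V, ent a k V * ent a k V * ent a' c V * ent a' c V ∂μ)
      = 1 / (p:ℝ) := by
    rw [← integral_finset_sum Finset.univ (fun c _ => integrable_prod4 μ a k a k a' c a' c)]
    have hone : ∀ V : OG p, (∑ c : Fin p, ent a k V * ent a k V * ent a' c V * ent a' c V)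
        = ent a k V * ent a k V := by
      intro V
      have expand : ∀ c : Fin p, ent a k V * ent a k V * ent a' c V * ent a' c V
          = (ent a k V * ent a k V) * (ent a' c V * ent a' c V) := fun _ => by ring
      rw [Finset.sum_congr rfl (fun c _ => expand c), ← Finset.mul_sum, row_sq V a', mul_one]
    rw [integral_congr_ae (Filter.EventuallyEq.of_eq (funext hone))]
    exact mom2_val μ hleft hright hp1 a k
  have hsplit : ∑ c : Fin p, (∫ V, ent a k V * ent a k V * ent a' c V * ent a' c V ∂μ)
      = 1 / ((p:ℝ) * ((p:ℝ) + 2))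
        + ((p:ℝ) - 1) * (∫ V, ent a k V * ent a k V * ent a' k' V * ent a' k' V ∂μ) := by
    rw [← Finset.add_sum_erase _ _ (Finset.mem_univ k), momC_val μ hleft hright hp1 a a' k ha]
    congr 1
    rw [Finset.sum_congr rfl (fun c hc => hconst c k' (Finset.ne_of_mem_erase hc) (Ne.symm hk)),
      Finset.sum_const, Finset.card_erase_of_mem (Finset.mem_univ k), Finset.card_univ,
      Fintype.card_fin, nsmul_eq_mul, Nat.cast_sub (by omega : 1 ≤ p)]
    norm_num
  rw [hsplit] at hsum
  have hp0 : (p:ℝ) ≠ 0 := by positivity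
  have hp2 : (p:ℝ) + 2 ≠ 0 := by positivity
  have hpm1 : (p:ℝ) - 1 ≠ 0 := by
    have : (1:ℝ) < (p:ℝ) := by exact_mod_cast hp1
    linarith
  have hD : ∫ V, ent a k V * ent a k V * ent a' k' V * ent a' k' V ∂μ
      = (1/(p:ℝ) - 1/((p:ℝ)*((p:ℝ)+2))) / ((p:ℝ)-1) := by
    rw [eq_div_iff hpm1]
    linarith
  rw [hD]
  field_simp
  ring

lemma momE_val (hp1 : 1 < p) (a a' k k' : Fin p) (ha : a ≠ a') (hk : k ≠ k') :
    ∫ V, ent a k V * ent a' k V * ent a k' V * ent a' k' V ∂μ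
      = -1 / (((p:ℝ) - 1) * (p:ℝ) * ((p:ℝ) + 2)) := by
  have hz2 : ∫ V, ent a k V * ent a k V * ent a' k V * ent a' k' V ∂μ = 0 :=
    odd4_col μ hright k' a a a' a' k k k hk hk hk
  have hz4 : ∫ V, ent a k V * ent a' k V * ent a' k V * ent a k' V ∂μ = 0 :=
    odd4_col μ hright k' a a' a' a k k k hk hk hk
  have hz6 : ∫ V, ent a' k' V * ent a' k' V * ent a k' V * ent a k V ∂μ = 0 :=
    odd4_col μ hright k a' a' a a k' k' k' (Ne.symm hk) (Ne.symm hk) (Ne.symm hk)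
  have hz8 : ∫ V, ent a k' V * ent a k' V * ent a' k' V * ent a' k V ∂μ = 0 :=
    odd4_col μ hright k a a a' a' k' k' k' (Ne.symm hk) (Ne.symm hk) (Ne.symm hk)
  have hcomb := int_comb9 μ (81/625) (-(216/625)) (144/625) (-(216/625)) (576/625)
      (-(384/625)) (144/625) (-(384/625)) (256/625)
      (fun V => ent a k V * ent a k V * ent a' k V * ent a' k V)
      (fun V => ent a k V * ent a k V * ent a' k V * ent a' k' V)
      (fun V => ent a k V * ent a k V * ent a' k' V * ent a' k' V)
      (fun V => ent a k V * ent a' k V * ent a' k V * ent a k' V)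
      (fun V => ent a k V * ent a' k V * ent a k' V * ent a' k' V)
      (fun V => ent a' k' V * ent a' k' V * ent a k' V * ent a k V)
      (fun V => ent a k' V * ent a k' V * ent a' k V * ent a' k V)
      (fun V => ent a k' V * ent a k' V * ent a' k' V * ent a' k V)
      (fun V => ent a k' V * ent a k' V * ent a' k' V * ent a' k' V)
      (integrable_prod4 μ a k a k a' k a' k) (integrable_prod4 μ a k a k a' k a' k')
      (integrable_prod4 μ a k a k a' k' a' k') (integrable_prod4 μ a k a' k a' k a k')
      (integrable_prod4 μ a k a' k a k' a' k') (integrable_prod4 μ a' k' a' k' a k' a k)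
      (integrable_prod4 μ a k' a k' a' k a' k) (integrable_prod4 μ a k' a k' a' k' a' k)
      (integrable_prod4 μ a k' a k' a' k' a' k')
  have hinv : ∫ V, ent a k (V * rotg hk) * ent a k (V * rotg hk)
        * ent a' k (V * rotg hk) * ent a' k (V * rotg hk) ∂μ
      = ∫ V, ent a k V * ent a k V * ent a' k V * ent a' k V ∂μ :=
    int_inv_right μ hright (rotg hk)
      (fun W => ent a k W * ent a k W * ent a' k W * ent a' k W) (meas4 a k a k a' k a' k)
  have hpt : ∀ V : OG p, (81:ℝ)/625 * (ent a k V * ent a k V * ent a' k V * ent a' k V)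
      + (-(216/625) * (ent a k V * ent a k V * ent a' k V * ent a' k' V)
      + (144/625 * (ent a k V * ent a k V * ent a' k' V * ent a' k' V)
      + (-(216/625) * (ent a k V * ent a' k V * ent a' k V * ent a k' V)
      + (576/625 * (ent a k V * ent a' k V * ent a k' V * ent a' k' V)
      + (-(384/625) * (ent a' k' V * ent a' k' V * ent a k' V * ent a k V)
      + (144/625 * (ent a k' V * ent a k' V * ent a' k V * ent a' k V)
      + (-(384/625) * (ent a k' V * ent a k' V * ent a' k' V * ent a' k V)
      + 256/625 * (ent a k' V * ent a k' V * ent a' k' V * ent a' k' V))))))))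
      = ent a k (V * rotg hk) * ent a k (V * rotg hk)
        * ent a' k (V * rotg hk) * ent a' k (V * rotg hk) := by
    intro V
    rw [ent_rotR hk a k V, ent_rotR hk a' k V, if_pos rfl, if_pos rfl]
    ring
  have hrel : (81:ℝ)/625 * (∫ V, ent a k V * ent a k V * ent a' k V * ent a' k V ∂μ)
      + (-(216/625) * (∫ V, ent a k V * ent a k V * ent a' k V * ent a' k' V ∂μ)
      + (144/625 * (∫ V, ent a k V * ent a k V * ent a' k' V * ent a' k' V ∂μ)
      + (-(216/625) * (∫ V, ent a k V * ent a' k V * ent a' k V * ent a k' V ∂μ)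
      + (576/625 * (∫ V, ent a k V * ent a' k V * ent a k' V * ent a' k' V ∂μ)
      + (-(384/625) * (∫ V, ent a' k' V * ent a' k' V * ent a k' V * ent a k V ∂μ)
      + (144/625 * (∫ V, ent a k' V * ent a k' V * ent a' k V * ent a' k V ∂μ)
      + (-(384/625) * (∫ V, ent a k' V * ent a k' V * ent a' k' V * ent a' k V ∂μ)
      + 256/625 * (∫ V, ent a k' V * ent a k' V * ent a' k' V * ent a' k' V ∂μ))))))))
      = ∫ V, ent a k V * ent a k V * ent a' k V * ent a' k V ∂μ := by
    rw [← hcomb, integral_congr_ae (Filter.EventuallyEq.of_eq (funext hpt))]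
    exact hinv
  rw [hz2, hz4, hz6, hz8, momC_val μ hleft hright hp1 a a' k ha,
    momC_val μ hleft hright hp1 a a' k' ha,
    momD_val μ hleft hright hp1 a a' k k' ha hk,
    momD_val μ hleft hright hp1 a a' k' k ha (Ne.symm hk)] at hrel
  have hp0 : (p:ℝ) ≠ 0 := by positivity
  have hp2 : (p:ℝ) + 2 ≠ 0 := by positivity
  have hpm1 : (p:ℝ) - 1 ≠ 0 := by
    have : (1:ℝ) < (p:ℝ) := by exact_mod_cast hp1
    linarith
  have e1 : ((p:ℝ) + 1) / (((p:ℝ) - 1) * (p:ℝ) * ((p:ℝ) + 2))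
      = ((p:ℝ) + 1) * (1 / (((p:ℝ) - 1) * (p:ℝ) * ((p:ℝ) + 2))) := by ring
  have e2 : (1:ℝ) / ((p:ℝ) * ((p:ℝ) + 2))
      = ((p:ℝ) - 1) * (1 / (((p:ℝ) - 1) * (p:ℝ) * ((p:ℝ) + 2))) := by
    field_simp
  have e3 : (-1:ℝ) / (((p:ℝ) - 1) * (p:ℝ) * ((p:ℝ) + 2))
      = -(1 / (((p:ℝ) - 1) * (p:ℝ) * ((p:ℝ) + 2))) := by ring
  rw [e1, e2] at hrel
  rw [e3]
  linarith [hrel]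


end MomentVals

theorem stmt19 (n pS pF : ℕ) (hn : 0 < n) (hpS : 0 < pS) (hpF : 0 < pF)
    (p : ℕ) (hp : p = pS + pF) (hnp : n < p) (hp1 : 1 < p)
    (μ : Measure ↥(Matrix.orthogonalGroup (Fin p) ℝ)) [IsProbabilityMeasure μ]
    (hleft : ∀ g : ↥(Matrix.orthogonalGroup (Fin p) ℝ),
      μ.map (fun V => g * V) = μ)
    (hright : ∀ g : ↥(Matrix.orthogonalGroup (Fin p) ℝ),
      μ.map (fun V => V * g) = μ)
    (R : Matrix (Fin pS) (Fin p) ℝ)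
    (hR : ∀ (a : Fin pS) (b : Fin p), R a b = if (b : ℕ) = (a : ℕ) then 1 else 0)
    (M : ↥(Matrix.orthogonalGroup (Fin p) ℝ) → Matrix (Fin p) (Fin p) ℝ)
    (hM : ∀ V, M V = ∑ k : Fin n,
      Matrix.vecMulVec (fun a => (V : Matrix (Fin p) (Fin p) ℝ) a (Fin.castLE hnp.le k))
        (fun a => (V : Matrix (Fin p) (Fin p) ℝ) a (Fin.castLE hnp.le k)))
    (i j : Fin pS) :
    ∫ V, ((R * M V * Rᵀ) * (R * M V * Rᵀ)) i j ∂μ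
      = ((n : ℝ) / ((p : ℝ) * ((p : ℝ) + 2)))
          * ((n : ℝ) + pS + 1 - ((pS : ℝ) - 1) * ((n : ℝ) - 1) / ((p : ℝ) - 1))
          * (1 : Matrix (Fin pS) (Fin pS) ℝ) i j := by
  have hpSp : pS ≤ p := by omega
  set e : Fin pS → Fin p := fun l => ⟨l.1, lt_of_lt_of_le l.2 hpSp⟩ with he
  set c : Fin n → Fin p := fun k => Fin.castLE hnp.le k with hc
  have hinj : ∀ x y : Fin pS, e x = e y → x = y := by
    intro x y h
    exact Fin.ext (by simpa using congrArg Fin.val h)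
  have hcinj : ∀ x y : Fin n, c x = c y → x = y := by
    intro x y h
    exact Fin.ext (by simpa [hc] using congrArg Fin.val h)
  -- entry formulas
  have hRA : ∀ (A : Matrix (Fin p) (Fin p) ℝ) (x : Fin pS) (b : Fin p),
      (R * A) x b = A (e x) b := by
    intro A x b
    rw [Matrix.mul_apply]
    have hterm : ∀ c', R x c' * A c' b = if c' = e x then A (e x) b else 0 := by
      intro c'
      rw [hR]
      by_cases h : c' = e x
      · subst h
        rw [if_pos rfl, if_pos rfl, one_mul]
      · rw [if_neg (fun hv => h (Fin.ext hv)), if_neg h, zero_mul]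
    rw [Finset.sum_congr rfl (fun c' _ => hterm c')]
    simp
  have hAR : ∀ (A : Matrix (Fin pS) (Fin p) ℝ) (x : Fin pS) (y : Fin pS),
      (A * Rᵀ) x y = A x (e y) := by
    intro A x y
    rw [Matrix.mul_apply]
    have hterm : ∀ b, A x b * Rᵀ b y = if b = e y then A x (e y) else 0 := by
      intro b
      rw [Matrix.transpose_apply, hR]
      by_cases h : b = e y
      · subst h
        rw [if_pos rfl, if_pos rfl, mul_one]
      · rw [if_neg (fun hv => h (Fin.ext hv)), if_neg h, mul_zero]
    rw [Finset.sum_congr rfl (fun b _ => hterm b)]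
    simp
  have hMV : ∀ (V : OG p) (x y : Fin p),
      M V x y = ∑ k : Fin n, ent x (c k) V * ent y (c k) V := by
    intro V x y
    rw [hM V]
    simp [Matrix.sum_apply, Matrix.vecMulVec_apply, ent, hc]
  have hB : ∀ (V : OG p) (x y : Fin pS), (R * M V * Rᵀ) x y = M V (e x) (e y) := by
    intro V x y
    rw [hAR, hRA]
  have hQexp : ∀ V : OG p, ((R * M V * Rᵀ) * (R * M V * Rᵀ)) i j
      = ∑ l : Fin pS, ∑ k : Fin n, ∑ k' : Fin n,
          ent (e i) (c k) V * ent (e l) (c k) V * ent (e l) (c k') V * ent (e j) (c k') V := by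
    intro V
    rw [Matrix.mul_apply]
    refine Finset.sum_congr rfl (fun l _ => ?_)
    rw [hB, hB, hMV, hMV, Finset.sum_mul_sum]
    exact Finset.sum_congr rfl (fun k _ => Finset.sum_congr rfl (fun k' _ => by ring))
  have hint : ∫ V, ((R * M V * Rᵀ) * (R * M V * Rᵀ)) i j ∂μ
      = ∑ l : Fin pS, ∑ k : Fin n, ∑ k' : Fin n,
          ∫ V, ent (e i) (c k) V * ent (e l) (c k) V * ent (e l) (c k') V
            * ent (e j) (c k') V ∂μ := by
    rw [integral_congr_ae (Filter.EventuallyEq.of_eq (funext hQexp)),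
      integral_finset_sum Finset.univ (fun l _ => integrable_finset_sum Finset.univ
        (fun k _ => integrable_finset_sum Finset.univ
          (fun k' _ => integrable_prod4 μ (e i) (c k) (e l) (c k) (e l) (c k') (e j) (c k'))))]
    refine Finset.sum_congr rfl (fun l _ => ?_)
    rw [integral_finset_sum Finset.univ (fun k _ => integrable_finset_sum Finset.univ
      (fun k' _ => integrable_prod4 μ (e i) (c k) (e l) (c k) (e l) (c k') (e j) (c k')))]
    refine Finset.sum_congr rfl (fun k _ => ?_)
    rw [integral_finset_sum Finset.univ
      (fun k' _ => integrable_prod4 μ (e i) (c k) (e l) (c k) (e l) (c k') (e j) (c k'))]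
  rw [hint]
  have hp0 : (p:ℝ) ≠ 0 := by positivity
  have hp2 : (p:ℝ) + 2 ≠ 0 := by positivity
  have hpm1 : (p:ℝ) - 1 ≠ 0 := by
    have : (1:ℝ) < (p:ℝ) := by exact_mod_cast hp1
    linarith
  rcases eq_or_ne i j with rfl | hij
  · -- diagonal case
    set Pv : ℝ := 3 / ((p:ℝ) * ((p:ℝ) + 2)) with hPv
    set Cv : ℝ := 1 / ((p:ℝ) * ((p:ℝ) + 2)) with hCv
    set Ev : ℝ := -1 / (((p:ℝ) - 1) * (p:ℝ) * ((p:ℝ) + 2)) with hEv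
    have key : ∀ (l : Fin pS) (k k' : Fin n),
        ∫ V, ent (e i) (c k) V * ent (e l) (c k) V * ent (e l) (c k') V
          * ent (e i) (c k') V ∂μ
        = if l = i then (if k = k' then Pv else Cv) else (if k = k' then Cv else Ev) := by
      intro l k k'
      rcases eq_or_ne l i with rfl | hl
      · rw [if_pos rfl]
        rcases eq_or_ne k k' with rfl | hk
        · rw [if_pos rfl]
          exact mom4_val μ hleft hright hp1 (e l) (c k)
        · rw [if_neg hk]
          have hck : c k ≠ c k' := fun h => hk (hcinj _ _ h)
          exact momB_val μ hleft hright hp1 (e l) (c k) (c k') hck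
      · rw [if_neg hl]
        have hel : e i ≠ e l := fun h => hl (hinj _ _ h).symm
        rcases eq_or_ne k k' with rfl | hk
        · rw [if_pos rfl]
          have hre : (fun V => ent (e i) (c k) V * ent (e l) (c k) V * ent (e l) (c k) V
              * ent (e i) (c k) V)
              = fun V => ent (e i) (c k) V * ent (e i) (c k) V * ent (e l) (c k) V
              * ent (e l) (c k) V := funext (fun V => by ring)
          rw [hre]
          exact momC_val μ hleft hright hp1 (e i) (e l) (c k) hel
        · rw [if_neg hk]
          have hck : c k ≠ c k' := fun h => hk (hcinj _ _ h)
          have hre : (fun V => ent (e i) (c k) V * ent (e l) (c k) V * ent (e l) (c k') V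
              * ent (e i) (c k') V)
              = fun V => ent (e i) (c k) V * ent (e l) (c k) V * ent (e i) (c k') V
              * ent (e l) (c k') V := funext (fun V => by ring)
          rw [hre]
          exact momE_val μ hleft hright hp1 (e i) (e l) (c k) (c k') hel hck
    rw [Finset.sum_congr rfl (fun l _ => Finset.sum_congr rfl (fun k _ =>
      Finset.sum_congr rfl (fun k' _ => key l k k')))]
    have hdd : ∀ l : Fin pS, (∑ k : Fin n, ∑ k' : Fin n,
        (if l = i then (if k = k' then Pv else Cv) else (if k = k' then Cv else Ev)))
        = if l = i then ((n:ℝ) * Pv + ((n:ℝ) * ((n:ℝ) - 1)) * Cv)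
          else ((n:ℝ) * Cv + ((n:ℝ) * ((n:ℝ) - 1)) * Ev) := by
      intro l
      rcases eq_or_ne l i with rfl | hl
      · simp only [if_pos rfl]
        exact sum_ifdiag Pv Cv
      · simp only [if_neg hl]
        exact sum_ifdiag Cv Ev
    rw [Finset.sum_congr rfl (fun l _ => hdd l), sum_ite_fixed i _ _, Matrix.one_apply_eq]
    rw [hPv, hCv, hEv]
    field_simp
    ring
  · -- off-diagonal case
    have hel : e i ≠ e j := fun h => hij (hinj _ _ h)
    have hzero : ∀ (l : Fin pS) (k k' : Fin n),
        ∫ V, ent (e i) (c k) V * ent (e l) (c k) V * ent (e l) (c k') V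
          * ent (e j) (c k') V ∂μ = 0 := by
      intro l k k'
      apply int_odd_row μ hleft (e j) _ (meas4 (e i) (c k) (e l) (c k) (e l) (c k') (e j) (c k'))
      intro V
      simp only [ent_flip_row, if_true]
      rw [if_neg hel]
      by_cases h : e l = e j
      · rw [if_pos h]
        ring
      · rw [if_neg h]
        ring
    rw [Finset.sum_congr rfl (fun l _ => Finset.sum_congr rfl (fun k _ =>
      Finset.sum_congr rfl (fun k' _ => hzero l k k')))]
    rw [Matrix.one_apply_ne hij]
    simp
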